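/- Let Q ∈ Δ_m have full support (Q_i > 0 for all i), let Π be nonempty with Q ∉ Π, and assume the regularity condition on Π. Then lim_{n→∞} D_KL(Π ∩ 𝒫_n ‖ Q) = D_KL(Π ‖ Q), where the infimum over the empty set is +∞. -/

import Mathlib

open Filter

noncomputable section

/-- The set of types of length-`n` sequences over an alphabet of size `m`:
probability vectors all of whose coordinates are integer multiples of `1/n`. -/
def typesP (m n : ℕ) : Set (Fin m → ℝ) :=
  {p | p ∈ stdSimplex ℝ (Fin m) ∧ ∀ i, ∃ k : ℕ, p i = (k : ℝ) / (n : ℝ)}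

/-- KL divergence `D_KL(P‖Q) = Σ_i P_i ln(P_i/Q_i)`. -/
def klDiv {m : ℕ} (P Q : Fin m → ℝ) : ℝ :=
  ∑ i, P i * Real.log (P i / Q i)

/-- KL divergence of a set of distributions from `Q` (as an extended real,
so that the infimum over the empty set is `+∞`). -/
def klDivSet {m : ℕ} (S : Set (Fin m → ℝ)) (Q : Fin m → ℝ) : EReal :=
  ⨅ P : S, ((klDiv P.1 Q : ℝ) : EReal)

/-- The set `Π` determined by the `K × m` matrix `A` over the alphabet of size
`m + 1`: probability vectors whose first `m` coordinates satisfy at least one of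
the `K` linear constraints `(A p)_i ≥ 0`. -/
def PiSet {K m : ℕ} (A : Matrix (Fin K) (Fin m) ℝ) : Set (Fin (m + 1) → ℝ) :=
  {p | p ∈ stdSimplex ℝ (Fin (m + 1)) ∧ ∃ i : Fin K, 0 ≤ ∑ j, A i j * p j.castSucc}

/-- The shifted set `Π_{n,ℓ}`: at least one constraint `(A p)_i ≥ ℓ/(n−ℓ)`. -/
def PiSetShift {K m : ℕ} (A : Matrix (Fin K) (Fin m) ℝ) (n ℓ : ℕ) :
    Set (Fin (m + 1) → ℝ) :=
  {p | p ∈ stdSimplex ℝ (Fin (m + 1)) ∧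
    ∃ i : Fin K, (ℓ : ℝ) / ((n : ℝ) - (ℓ : ℝ)) ≤ ∑ j, A i j * p j.castSucc}

/-- The regularity condition: every point of `Π` is a limit of points of the
simplex satisfying some constraint strictly. -/
def RegularPi {K m : ℕ} (A : Matrix (Fin K) (Fin m) ℝ) : Prop :=
  ∀ p ∈ PiSet A, p ∈ closure {q : Fin (m + 1) → ℝ |
    q ∈ stdSimplex ℝ (Fin (m + 1)) ∧ ∃ i : Fin K, 0 < ∑ j, A i j * q j.castSucc}

lemma klDivSet_le {m : ℕ} {S : Set (Fin m → ℝ)} {Q P : Fin m → ℝ} (h : P ∈ S) :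
    klDivSet S Q ≤ ((klDiv P Q : ℝ) : EReal) :=
  iInf_le _ (⟨P, h⟩ : S)

lemma klDiv_continuous {m : ℕ} (Q : Fin m → ℝ) (hQpos : ∀ i, 0 < Q i) :
    Continuous (fun P : Fin m → ℝ => klDiv P Q) := by
  have h : ∀ P : Fin m → ℝ, klDiv P Q = ∑ i, (P i * Real.log (P i) - P i * Real.log (Q i)) := by
    intro P
    refine Finset.sum_congr rfl fun i _ => ?_
    rcases eq_or_ne (P i) 0 with h0 | h0
    · simp [h0]
    · rw [Real.log_div h0 (hQpos i).ne']; ring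
  simp only [funext h]
  exact continuous_finset_sum _ fun i _ =>
    (Real.continuous_mul_log.comp (continuous_apply i)).sub
      ((continuous_apply i).mul continuous_const)

lemma klDivSet_anti {m : ℕ} {S T : Set (Fin m → ℝ)} (h : S ⊆ T) (Q : Fin m → ℝ) :
    klDivSet T Q ≤ klDivSet S Q :=
  le_iInf fun P => iInf_le _ (⟨P.1, h P.2⟩ : T)

/-- for full-support `Q ∉ Π` with `Π` nonempty and regular,
`lim_{n→∞} D_KL(Π ∩ 𝒫_n ‖ Q) = D_KL(Π ‖ Q)` (infimum over the empty set is `+∞`). -/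
theorem kl_projection_of_types_tendsto
    {K m : ℕ} (A : Matrix (Fin K) (Fin m) ℝ)
    (Q : Fin (m + 1) → ℝ) (hQ : Q ∈ stdSimplex ℝ (Fin (m + 1)))
    (hQpos : ∀ i, 0 < Q i)
    (hne : (PiSet A).Nonempty) (hQnot : Q ∉ PiSet A)
    (hreg : RegularPi A) :
    Tendsto (fun n : ℕ => klDivSet (PiSet A ∩ typesP (m + 1) n) Q) atTop
      (nhds (klDivSet (PiSet A) Q)) := by
  classical
  have hcont := klDiv_continuous Q hQpos
  set D := klDivSet (PiSet A) Q with hD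
  rw [tendsto_order]
  constructor
  · intro a ha
    exact Eventually.of_forall fun n =>
      lt_of_lt_of_le ha (klDivSet_anti Set.inter_subset_left Q)
  · intro b hb
    -- pick a real c with D < c < b
    have hDbot : D ≠ ⊥ := by
      obtain ⟨PB, -, hPB⟩ := (isCompact_stdSimplex ℝ (Fin (m+1))).exists_isMinOn
        ⟨Q, hQ⟩ hcont.continuousOn
      have : (klDiv PB Q : EReal) ≤ D :=
        le_iInf fun P => EReal.coe_le_coe_iff.2 (isMinOn_iff.1 hPB P.1 P.2.1)
      exact fun h => by simp [h] at this
    obtain ⟨c, hDc, hcb⟩ := EReal.exists_between_coe_real hb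
    -- find p ∈ Π with klDiv p Q < c
    have : ∃ P : PiSet A, ((klDiv P.1 Q : ℝ) : EReal) < (c : EReal) := by
      rwa [← iInf_lt_iff]
    obtain ⟨⟨p, hp⟩, hpc⟩ := this
    have hpc' : klDiv p Q < c := EReal.coe_lt_coe_iff.1 hpc
    -- use regularity to find q in the strict set with klDiv q Q < c
    have hU : IsOpen {r : Fin (m+1) → ℝ | klDiv r Q < c} :=
      isOpen_lt hcont continuous_const
    obtain ⟨q, hqU, hqsimp, i0, hi0⟩ :=
      mem_closure_iff.1 (hreg p hp) _ hU hpc'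
    -- construct types approximating q
    set g : ℕ → Fin m → ℕ := fun n j => ⌊q j.castSucc * (n : ℝ)⌋₊ with hg
    have hqnn : ∀ i, 0 ≤ q i := fun i => hqsimp.1 i
    have hsum_le : ∀ n : ℕ, (∑ j, g n j) ≤ n := by
      intro n
      have h1 : ((∑ j, g n j : ℕ) : ℝ) ≤ ∑ j : Fin m, q j.castSucc * n := by
        push_cast
        exact Finset.sum_le_sum fun j _ =>
          Nat.floor_le (mul_nonneg (hqnn _) (Nat.cast_nonneg _))
      have h2 : ∑ j : Fin m, q j.castSucc * n ≤ (n : ℝ) := by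
        rw [← Finset.sum_mul]
        have h3 : ∑ j : Fin m, q j.castSucc ≤ 1 := by
          have := hqsimp.2
          rw [Fin.sum_univ_castSucc] at this
          nlinarith [hqnn (Fin.last m)]
        nlinarith [Nat.cast_nonneg (α := ℝ) n]
      exact_mod_cast h1.trans h2
    set t : ℕ → Fin (m+1) → ℝ := fun n =>
      Fin.snoc (fun j => (g n j : ℝ) / n) (((n - ∑ j, g n j : ℕ) : ℝ) / n) with ht
    have htlast : ∀ n : ℕ, 1 ≤ n → t n (Fin.last m) = 1 - ∑ j : Fin m, (g n j : ℝ) / n := by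
      intro n hn
      have hn0 : (n : ℝ) ≠ 0 := Nat.cast_ne_zero.2 (by omega)
      simp only [ht, Fin.snoc_last]
      rw [Nat.cast_sub (hsum_le n)]
      push_cast
      rw [sub_div, div_self hn0, Finset.sum_div]
    -- membership facts
    have hmem : ∀ n : ℕ, 1 ≤ n → t n ∈ typesP (m + 1) n := by
      intro n hn
      have hn0 : (n : ℝ) ≠ 0 := Nat.cast_ne_zero.2 (by omega)
      have hsimp : t n ∈ stdSimplex ℝ (Fin (m+1)) := by
        constructor
        · intro i
          refine Fin.lastCases ?_ ?_ i
          · simp only [ht, Fin.snoc_last]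
            positivity
          · intro j
            simp only [ht, Fin.snoc_castSucc]
            positivity
        · rw [Fin.sum_univ_castSucc]
          simp only [ht, Fin.snoc_castSucc, Fin.snoc_last]
          rw [← Finset.sum_div, Nat.cast_sub (hsum_le n)]
          field_simp
          push_cast
          ring
      refine ⟨hsimp, fun i => ?_⟩
      refine Fin.lastCases ?_ ?_ i
      · exact ⟨n - ∑ j, g n j, by simp [ht, Fin.snoc_last]⟩
      · exact fun j => ⟨g n j, by simp [ht, Fin.snoc_castSucc]⟩
    -- convergence of t to q
    have httend : Tendsto t atTop (nhds q) := by
      rw [tendsto_pi_nhds]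
      intro i
      have hco : ∀ j : Fin m,
          Tendsto (fun n : ℕ => (g n j : ℝ) / n) atTop (nhds (q j.castSucc)) := by
        intro j
        exact (tendsto_nat_floor_mul_div_atTop (hqnn j.castSucc)).comp
          tendsto_natCast_atTop_atTop
      refine Fin.lastCases ?_ (fun j => (hco j).congr fun n => by
        simp [ht, Fin.snoc_castSucc]) i
      · have : Tendsto (fun n : ℕ => 1 - ∑ j : Fin m, (g n j : ℝ) / n) atTop
            (nhds (1 - ∑ j : Fin m, q j.castSucc)) :=
          tendsto_const_nhds.sub (tendsto_finset_sum _ fun j _ => hco j)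
        have hlast : q (Fin.last m) = 1 - ∑ j : Fin m, q j.castSucc := by
          have := hqsimp.2
          rw [Fin.sum_univ_castSucc] at this
          linarith
        rw [hlast]
        refine this.congr' ?_
        filter_upwards [eventually_ge_atTop 1] with n hn
        exact (htlast n hn).symm
    -- eventual constraint satisfaction
    have hconstr : ∀ᶠ n : ℕ in atTop, 0 < ∑ j, A i0 j * t n j.castSucc := by
      have hc : Continuous fun p : Fin (m+1) → ℝ => ∑ j, A i0 j * p j.castSucc :=
        continuous_finset_sum _ fun j _ => continuous_const.mul (continuous_apply _)
      exact ((hc.tendsto q).comp httend).eventually (eventually_gt_nhds hi0)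
    have hkl : ∀ᶠ n : ℕ in atTop, klDiv (t n) Q < c :=
      ((hcont.tendsto q).comp httend).eventually (eventually_lt_nhds hqU)
    filter_upwards [hconstr, hkl, eventually_ge_atTop 1] with n h1 h2 h3
    have htmem : t n ∈ PiSet A ∩ typesP (m + 1) n :=
      ⟨⟨(hmem n h3).1, i0, le_of_lt h1⟩, hmem n h3⟩
    calc klDivSet (PiSet A ∩ typesP (m + 1) n) Q
        ≤ ((klDiv (t n) Q : ℝ) : EReal) := klDivSet_le htmem
      _ < (c : EReal) := EReal.coe_lt_coe_iff.2 h2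
      _ < b := hcb



end
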